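/- With 𝔊, 𝒢_{κ¹}, G² and 𝒫 as in the product construction below: Player 0 has a winning strategy from the initial vertex v_init in the augmented game 𝔊 if and only if Player 0 has a winning strategy from the initial vertex (v_init, u0) in the product game 𝒫. -/

import Mathlib

universe u

/-- A two-player game graph: finite-intended vertex set `V`, an ownership function
(`owner v = 0` means `v` is a Player-0 vertex, `owner v = 1` a Player-1 vertex),
and an edge relation such that every vertex has at least one outgoing edge. -/
structure GameGraph (V : Type u) where
  owner : V → Fin 2
  E : V → V → Prop
  exists_succ : ∀ v, ∃ w, E v w

variable {V : Type u}

/-- A play of the game graph: an infinite sequence of vertices following edges. -/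
def IsPlay (G : GameGraph V) (ρ : ℕ → V) : Prop :=
  ∀ k, G.E (ρ k) (ρ (k + 1))

/-- A (history-dependent) strategy: given the list of previously visited
vertices and the current vertex, it chooses a next vertex. -/
abbrev Strategy (V : Type u) := List V → V → V

/-- A strategy of Player `i` is valid if at each Player-`i` vertex it chooses
an edge of the game graph. -/
def StratValid (G : GameGraph V) (i : Fin 2) (σ : Strategy V) : Prop :=
  ∀ (h : List V) (v : V), G.owner v = i → G.E v (σ h v)

/-- A positional (memoryless) strategy ignores the history. -/
def Positional (σ : Strategy V) : Prop :=
  ∀ (h h' : List V) (v : V), σ h v = σ h' v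

/-- A play is compliant with the strategy `σ` of Player `i` (a `σ`-play) if at
every Player-`i` vertex it moves to the vertex chosen by `σ`. -/
def Compliant (G : GameGraph V) (i : Fin 2) (σ : Strategy V) (ρ : ℕ → V) : Prop :=
  ∀ k, G.owner (ρ k) = i → ρ (k + 1) = σ (List.ofFn fun j : Fin k => ρ j.val) (ρ k)

/-- `σ` is a winning strategy for Player `i` from `v`, where `W` is the set of
plays that are winning for Player `i`. -/
def WinsFrom (G : GameGraph V) (i : Fin 2) (W : Set (ℕ → V)) (σ : Strategy V) (v : V) : Prop :=
  StratValid G i σ ∧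
    ∀ ρ : ℕ → V, IsPlay G ρ → Compliant G i σ ρ → ρ 0 = v → ρ ∈ W

/-- The winning region of Player `i`: the vertices from which Player `i` has a
winning strategy. -/
def WinRegion (G : GameGraph V) (i : Fin 2) (W : Set (ℕ → V)) : Set V :=
  {v | ∃ σ, WinsFrom G i W σ v}

/-- A vertex occurs infinitely often along a play. -/
def InfOft (ρ : ℕ → V) (v : V) : Prop := ∀ n, ∃ k, n ≤ k ∧ ρ k = v

/-- An edge is taken infinitely often along a play. -/
def EdgeInfOft (ρ : ℕ → V) (e : V × V) : Prop :=
  ∀ n, ∃ k, n ≤ k ∧ ρ k = e.1 ∧ ρ (k + 1) = e.2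

/-- Parity objective: the maximal priority occurring infinitely often is even. -/
def ParityWin (P : V → ℕ) (ρ : ℕ → V) : Prop :=
  ∃ v, InfOft ρ v ∧ Even (P v) ∧ ∀ w, InfOft ρ w → P w ≤ P v

/-- The set of source vertices of a set of edges. -/
def srcSet (H : Set (V × V)) : Set V := {u | ∃ w, (u, w) ∈ H}

/-- Group transition fairness (live group) assumption: for every live group `H`,
if some source vertex of `H` occurs infinitely often, then some edge of `H` is
taken infinitely often. -/
def psiGlive (Hc : Set (Set (V × V))) (ρ : ℕ → V) : Prop :=
  ∀ H ∈ Hc, (∃ u ∈ srcSet H, InfOft ρ u) → ∃ e ∈ H, EdgeInfOft ρ e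

/-- Vertices of the small labeled augmented game graph `G²`: the Player-1 vertex
`u0`, and the Player-0 vertices `u_*` and `x_1, …, x_m`. -/
inductive U2 (m : ℕ) : Type
  | u0 : U2 m
  | ustar : U2 m
  | x : Fin m → U2 m

/-- The labeled edge relation of `𝒢_{κ¹}`: an edge `u → w` of `G` carries the
label `some i` (the letter `h_i`) if it belongs to the live group `H_i`, and the
label `none` (the letter `a`) otherwise. -/
def Ledge1 (G : GameGraph V) {m : ℕ} (Hs : Fin m → Set (V × V))
    (u w : V) (c : Option (Fin m)) : Prop :=
  G.E u w ∧ ((∃ i, c = some i ∧ (u, w) ∈ Hs i) ∨ (c = none ∧ ∀ i, (u, w) ∉ Hs i))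

/-- The labeled edge relation of `G²`: edges `(u0, x_i)` labeled `h_i` (these are
the live edges), and edges `(x_i, u0)`, `(u0, u_*)`, `(u_*, u0)` labeled `a`. -/
def Ledge2 {m : ℕ} : U2 m → U2 m → Option (Fin m) → Prop
  | U2.u0, U2.x i, c => c = some i
  | U2.x _, U2.u0, c => c = none
  | U2.u0, U2.ustar, c => c = none
  | U2.ustar, U2.u0, c => c = none
  | _, _, _ => False

/-- The edge relation of the product game `𝒫`: `(v,v') → (w,w')` iff for some
letter `c` both `v → w` is an edge of `𝒢_{κ¹}` labeled `c` and `v' → w'` is an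
edge of `G²` labeled `c`. -/
def Eprod (G : GameGraph V) {m : ℕ} (Hs : Fin m → Set (V × V))
    (p q : V × U2 m) : Prop :=
  ∃ c : Option (Fin m), Ledge1 G Hs p.1 q.1 c ∧ Ledge2 p.2 q.2 c

/-- The live group `H_{(u0, x_i)}` of the product game: all product edges whose
second components move from `u0` to `x_i`. -/
def Hprod (G : GameGraph V) {m : ℕ} (Hs : Fin m → Set (V × V)) (i : Fin m) :
    Set ((V × U2 m) × (V × U2 m)) :=
  {e | Eprod G Hs e.1 e.2 ∧ e.1.2 = U2.u0 ∧ e.2.2 = U2.x i}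

/-- The set `ℋ_𝒫 = {H_{(u0,x_i)} : i ∈ [1;m]}` of live groups of the product. -/
def HprodSet (G : GameGraph V) {m : ℕ} (Hs : Fin m → Set (V × V)) :
    Set (Set ((V × U2 m) × (V × U2 m))) :=
  {H | ∃ i : Fin m, H = Hprod G Hs i}

/-- First projection of a play of the product game. -/
def proj1 {m : ℕ} (ρ : ℕ → V × U2 m) : ℕ → V := fun n => (ρ n).1

/-- Ownership in the product game: the Player-0 vertices are those of
`V0 × {u_*, x_1, …, x_m}`, i.e. the pairs whose second component differs from
`u0`; the Player-1 vertices are those of `V1 × {u0}`. -/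
def ownerProd {m : ℕ} : V × U2 m → Fin 2 :=
  fun p => match p.2 with
    | U2.u0 => 1
    | _ => 0

/-- Player 0 has a winning strategy from `p0` in the product game `𝒫`: there is
a strategy choosing, at each Player-0 vertex of the product (that has a
successor), a product edge, such that every compliant play of `𝒫` from `p0` is
winning for Player 0 in `𝒫`. -/
def prodWin0From (G : GameGraph V) {m : ℕ} (Hs : Fin m → Set (V × V))
    (Φ : Set (ℕ → V)) (p0 : V × U2 m) : Prop :=
  ∃ σ : List (V × U2 m) → (V × U2 m) → (V × U2 m),
    (∀ (h : List (V × U2 m)) (p : V × U2 m), ownerProd p = 0 →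
      (∃ q, Eprod G Hs p q) → Eprod G Hs p (σ h p)) ∧
    ∀ ρ : ℕ → V × U2 m,
      (∀ n, Eprod G Hs (ρ n) (ρ (n + 1))) →
      (∀ n, ownerProd (ρ n) = 0 →
        ρ (n + 1) = σ (List.ofFn fun j : Fin n => ρ j.val) (ρ n)) →
      ρ 0 = p0 →
      (psiGlive (HprodSet G Hs) ρ → proj1 ρ ∈ Φ)

namespace Stmt10Aux

lemma fin2_eq_zero_of_ne_one : ∀ {a : Fin 2}, a ≠ 1 → a = 0
  | 0, _ => rfl
  | 1, h => absurd rfl h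

lemma fin2_eq_one_of_ne_zero : ∀ {a : Fin 2}, a ≠ 0 → a = 1
  | 1, _ => rfl
  | 0, h => absurd rfl h

variable {V : Type u} (G : GameGraph V) {m : ℕ} (Hs : Fin m → Set (V × V))

open Classical in
/-- The tag of a vertex `v` given the previous vertex `u` along the play. -/
noncomputable def tagOf (u v : V) : U2 m :=
  if G.owner v = 1 then U2.u0
  else if h : ∃ i, (u, v) ∈ Hs i then U2.x h.choose else U2.ustar

lemma tagOf_eq_u0_iff (u v : V) :
    tagOf G Hs u v = U2.u0 ↔ G.owner v = 1 := by
  unfold tagOf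
  by_cases h : G.owner v = 1
  · simp [h]
  · rw [if_neg h]
    constructor
    · intro hc
      exfalso
      by_cases hx : ∃ i, (u, v) ∈ Hs i
      · rw [dif_pos hx] at hc; cases hc
      · rw [dif_neg hx] at hc; cases hc
    · intro hc; exact absurd hc h

/-- Tags along a play. -/
noncomputable def tg (π : ℕ → V) : ℕ → U2 m
  | 0 => U2.u0
  | n + 1 => tagOf G Hs (π n) (π (n + 1))

/-- Lift a history list of `G` to a history list of the product. -/
noncomputable def liftL (h : List V) : List (V × U2 m) :=
  List.ofFn fun j : Fin h.length =>
    (h.get j, tagOf G Hs (h.getD (j.1 - 1) (h.get j)) (h.get j))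

lemma ownerProd_eq_zero_iff {p : V × U2 m} : ownerProd p = 0 ↔ p.2 ≠ U2.u0 := by
  rcases p with ⟨v, t⟩
  cases t <;> simp [ownerProd]

/-- The label of an edge in a live group is forced. -/
lemma label_forced {u v : V} {c : Option (Fin m)} {i : Fin m}
    (hdisj : ∀ i j, i ≠ j → Disjoint (Hs i) (Hs j))
    (h1 : Ledge1 G Hs u v c) (hi : (u, v) ∈ Hs i) : c = some i := by
  rcases h1.2 with ⟨j, hc, hj⟩ | ⟨hc, hall⟩
  · subst hc
    congr 1
    by_contra hne
    exact Set.disjoint_left.mp (hdisj j i hne) hj hi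
  · exact absurd hi (hall i)

/-- Lifting an edge of `G` to an edge of the product. -/
lemma lift_edge (halt : ∀ u w : V, G.E u w → G.owner u ≠ G.owner w)
    (hH1 : ∀ i, ∀ e ∈ Hs i, G.owner e.1 = 1)
    {u v : V} (hE : G.E u v) {t : U2 m} (ht : t = U2.u0 ↔ G.owner u = 1) :
    Eprod G Hs (u, t) (v, tagOf G Hs u v) := by
  have hne := halt u v hE
  by_cases hu : G.owner u = 1
  · have ht0 : t = U2.u0 := ht.mpr hu
    have hv : G.owner v ≠ 1 := fun h => hne (hu.trans h.symm)
    subst ht0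
    by_cases hx : ∃ i, (u, v) ∈ Hs i
    · have htag : tagOf G Hs u v = U2.x hx.choose := by
        unfold tagOf; rw [if_neg hv, dif_pos hx]
      rw [htag]
      exact ⟨some hx.choose, ⟨hE, Or.inl ⟨hx.choose, rfl, hx.choose_spec⟩⟩, rfl⟩
    · have htag : tagOf G Hs u v = U2.ustar := by
        unfold tagOf; rw [if_neg hv, dif_neg hx]
      rw [htag]
      exact ⟨none, ⟨hE, Or.inr ⟨rfl, fun i hi => hx ⟨i, hi⟩⟩⟩, rfl⟩
  · have hu0 : G.owner u = 0 := fin2_eq_zero_of_ne_one hu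
    have hv : G.owner v = 1 := fin2_eq_one_of_ne_zero (fun h => hne (hu0.trans h.symm))
    have htag : tagOf G Hs u v = U2.u0 := by unfold tagOf; rw [if_pos hv]
    have hnotin : ∀ i, (u, v) ∉ Hs i := fun i hi => hu (hH1 i _ hi)
    rw [htag]
    refine ⟨none, ⟨hE, Or.inr ⟨rfl, hnotin⟩⟩, ?_⟩
    have htne : t ≠ U2.u0 := fun h => hu (ht.mp h)
    cases t with
    | u0 => exact absurd rfl htne
    | ustar => rfl
    | x i => rfl

/-- Invariant for product plays started at a `u0`-vertex. -/
lemma inv_of_play (halt : ∀ u w : V, G.E u w → G.owner u ≠ G.owner w)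
    {ρ : ℕ → V × U2 m} (hplay : ∀ n, Eprod G Hs (ρ n) (ρ (n + 1)))
    {vinit : V} (hvinit : G.owner vinit = 1) (hinit : ρ 0 = (vinit, U2.u0)) :
    ∀ n, ((ρ n).2 = U2.u0 ↔ G.owner (ρ n).1 = 1) := by
  intro n
  induction n with
  | zero => rw [hinit]; exact ⟨fun _ => hvinit, fun _ => rfl⟩
  | succ k ih =>
    obtain ⟨c, h1, h2⟩ := hplay k
    have hE : G.E (ρ k).1 (ρ (k + 1)).1 := h1.1
    have hne := halt _ _ hE
    rcases hsk : (ρ k).2 with _ | _ | i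
    · -- from u0
      have ho : G.owner (ρ k).1 = 1 := ih.mp hsk
      rw [hsk] at h2
      have hv0 : G.owner (ρ (k + 1)).1 ≠ 1 := fun h => hne (ho.trans h.symm)
      constructor
      · intro h
        exfalso
        rw [h] at h2
        exact h2
      · intro h; exact absurd h hv0
    · -- from ustar
      have ho : G.owner (ρ k).1 ≠ 1 := fun h => by
        have h' := ih.mpr h; rw [hsk] at h'; cases h'
      have hv : G.owner (ρ (k + 1)).1 = 1 :=
        fin2_eq_one_of_ne_zero (fun h => hne ((fin2_eq_zero_of_ne_one ho).trans h.symm))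
      rw [hsk] at h2
      rcases hsk1 : (ρ (k + 1)).2 with _ | _ | j
      · exact ⟨fun _ => hv, fun _ => rfl⟩
      · rw [hsk1] at h2; exact h2.elim
      · rw [hsk1] at h2; exact h2.elim
    · -- from x i
      have ho : G.owner (ρ k).1 ≠ 1 := fun h => by
        have h' := ih.mpr h; rw [hsk] at h'; cases h'
      have hv : G.owner (ρ (k + 1)).1 = 1 :=
        fin2_eq_one_of_ne_zero (fun h => hne ((fin2_eq_zero_of_ne_one ho).trans h.symm))
      rw [hsk] at h2
      rcases hsk1 : (ρ (k + 1)).2 with _ | _ | j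
      · exact ⟨fun _ => hv, fun _ => rfl⟩
      · rw [hsk1] at h2; exact h2.elim
      · rw [hsk1] at h2; exact h2.elim

/-- If an edge of the play (projected) lies in `Hs i`, the tags are forced. -/
lemma key_tags
    (hdisj : ∀ i j, i ≠ j → Disjoint (Hs i) (Hs j))
    (hH1 : ∀ i, ∀ e ∈ Hs i, G.owner e.1 = 1)
    {ρ : ℕ → V × U2 m} (hplay : ∀ n, Eprod G Hs (ρ n) (ρ (n + 1)))
    (hinv : ∀ n, ((ρ n).2 = U2.u0 ↔ G.owner (ρ n).1 = 1))
    (k : ℕ) (i : Fin m) (hmem : ((ρ k).1, (ρ (k + 1)).1) ∈ Hs i) :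
    (ρ k).2 = U2.u0 ∧ (ρ (k + 1)).2 = U2.x i := by
  have h2u : (ρ k).2 = U2.u0 := (hinv k).mpr (hH1 i _ hmem)
  obtain ⟨c, h1, h2⟩ := hplay k
  have hc : c = some i := label_forced G Hs hdisj h1 hmem
  subst hc
  rw [h2u] at h2
  refine ⟨h2u, ?_⟩
  rcases hsk1 : (ρ (k + 1)).2 with _ | _ | j
  · rw [hsk1] at h2; exact h2.elim
  · rw [hsk1] at h2; simp [Ledge2] at h2
  · rw [hsk1] at h2
    injection h2 with h
    rw [h]

/-- Fairness transfer between a product play and its projection. -/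
lemma fair_iff
    (hHE : ∀ i, ∀ e ∈ Hs i, G.E e.1 e.2)
    (hH1 : ∀ i, ∀ e ∈ Hs i, G.owner e.1 = 1)
    (hdisj : ∀ i j, i ≠ j → Disjoint (Hs i) (Hs j))
    {ρ : ℕ → V × U2 m} (hplay : ∀ n, Eprod G Hs (ρ n) (ρ (n + 1)))
    (hinv : ∀ n, ((ρ n).2 = U2.u0 ↔ G.owner (ρ n).1 = 1)) :
    psiGlive (HprodSet G Hs) ρ ↔ psiGlive {H | ∃ i : Fin m, H = Hs i} (proj1 ρ) := by
  constructor
  · intro hp H hH hsrc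
    rcases hH with ⟨i, rfl⟩
    obtain ⟨u, ⟨w, huw⟩, hio⟩ := hsrc
    have hEuw : G.E u w := hHE i _ huw
    have hou : G.owner u = 1 := hH1 i _ huw
    have hsrc' : ∃ p ∈ srcSet (Hprod G Hs i), InfOft ρ p := by
      refine ⟨(u, U2.u0), ⟨(w, U2.x i), ?_, rfl, rfl⟩, ?_⟩
      · exact ⟨some i, ⟨hEuw, Or.inl ⟨i, rfl, huw⟩⟩, rfl⟩
      · intro n
        obtain ⟨k, hk, hku⟩ := hio n
        have h1 : (ρ k).1 = u := hku
        have h2 : (ρ k).2 = U2.u0 := (hinv k).mpr (by rw [h1]; exact hou)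
        exact ⟨k, hk, Prod.ext h1 h2⟩
    obtain ⟨e, ⟨⟨c, h1, h2⟩, he1, he2⟩, hEio⟩ := hp _ ⟨i, rfl⟩ hsrc'
    have hc : c = some i := by
      rw [he1, he2] at h2; exact h2
    subst hc
    have hmem : (e.1.1, e.2.1) ∈ Hs i := by
      rcases h1.2 with ⟨j, hcj, hj⟩ | ⟨hcn, _⟩
      · injection hcj with hji; rw [hji]; exact hj
      · cases hcn
    refine ⟨(e.1.1, e.2.1), hmem, ?_⟩
    intro n
    obtain ⟨k, hk, hk1, hk2⟩ := hEio n
    exact ⟨k, hk, by simp [proj1, hk1], by simp [proj1, hk2]⟩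
  · intro hp H hH hsrc
    rcases hH with ⟨i, rfl⟩
    obtain ⟨p, ⟨q, ⟨⟨c, h1, h2⟩, hp2, hq2⟩⟩, hio⟩ := hsrc
    have hc : c = some i := by rw [hp2, hq2] at h2; exact h2
    subst hc
    have hmem : (p.1, q.1) ∈ Hs i := by
      rcases h1.2 with ⟨j, hcj, hj⟩ | ⟨hcn, _⟩
      · injection hcj with hji; rw [hji]; exact hj
      · cases hcn
    have hsrc' : ∃ u ∈ srcSet (Hs i), InfOft (proj1 ρ) u := by
      refine ⟨p.1, ⟨q.1, hmem⟩, fun n => ?_⟩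
      obtain ⟨k, hk, hkp⟩ := hio n
      exact ⟨k, hk, by simp [proj1, hkp]⟩
    obtain ⟨e, he, hEio⟩ := hp _ ⟨i, rfl⟩ hsrc'
    obtain ⟨v, w⟩ := e
    refine ⟨((v, U2.u0), (w, U2.x i)), ⟨⟨some i, ⟨hHE i _ he, Or.inl ⟨i, rfl, he⟩⟩, rfl⟩, rfl, rfl⟩, ?_⟩
    intro n
    obtain ⟨k, hk, hk1, hk2⟩ := hEio n
    simp only [proj1] at hk1 hk2
    have hmem' : ((ρ k).1, (ρ (k + 1)).1) ∈ Hs i := by rw [hk1, hk2]; exact he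
    obtain ⟨t1, t2⟩ := key_tags G Hs hdisj hH1 hplay hinv k i hmem'
    exact ⟨k, hk, Prod.ext hk1 t1, Prod.ext hk2 t2⟩

lemma liftL_ofFn (π : ℕ → V) (h0 : G.owner (π 0) = 1) (n : ℕ) :
    liftL G Hs (List.ofFn fun j : Fin n => π j.val) =
      List.ofFn fun j : Fin n => (π j.val, tg G Hs π j.val) := by
  unfold liftL
  apply List.ext_getElem
  · simp
  · intro j hj hj'
    simp only [List.length_ofFn] at hj hj'
    simp only [List.getElem_ofFn, List.get_eq_getElem, Fin.coe_cast]
    have hj1 : j - 1 < n := by omega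
    rw [List.getD_eq_getElem _ _ (by simpa using hj1)]
    simp only [List.getElem_ofFn, Fin.coe_cast]
    refine Prod.ext rfl ?_
    rcases j with _ | k
    · show tagOf G Hs (π 0) (π 0) = tg G Hs π 0
      unfold tagOf tg
      rw [if_pos h0]
    · rfl


lemma ledge2_to_u0 {t : U2 m} (h : t ≠ U2.u0) : Ledge2 t U2.u0 (none : Option (Fin m)) := by
  cases t with
  | u0 => exact absurd rfl h
  | ustar => rfl
  | x i => rfl

end Stmt10Aux

/-- With `𝔊`, `𝒢_{κ¹}`, `G²` and `𝒫` as in the product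
construction, Player 0 has a winning strategy from the initial vertex `v_init`
in the augmented game `𝔊` iff Player 0 has a winning strategy from the initial
vertex `(v_init, u0)` of the product game `𝒫`. -/
theorem stmt10 (V : Type) [Fintype V] (G : GameGraph V)
    (halt : ∀ u w : V, G.E u w → G.owner u ≠ G.owner w)
    (m : ℕ) (Hs : Fin m → Set (V × V))
    (hHE : ∀ i, ∀ e ∈ Hs i, G.E e.1 e.2)
    (hH1 : ∀ i, ∀ e ∈ Hs i, G.owner e.1 = 1)
    (hdisj : ∀ i j, i ≠ j → Disjoint (Hs i) (Hs j))
    (Φ : Set (ℕ → V))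
    (vinit : V) (hvinit : G.owner vinit = 1) :
    (∃ σ : Strategy V,
        WinsFrom G 0 {ρ | psiGlive {H | ∃ i : Fin m, H = Hs i} ρ → ρ ∈ Φ} σ vinit) ↔
      prodWin0From G Hs Φ (vinit, U2.u0) := by
  classical
  open Stmt10Aux in
  constructor
  · -- G winner ⇒ product winner
    rintro ⟨σ, hval, hwin⟩
    refine ⟨fun h p =>
        if hp : G.owner p.1 = 0 ∧ p.2 ≠ U2.u0 then (σ (h.map Prod.fst) p.1, U2.u0)
        else if hq : ∃ q, Eprod G Hs p q then hq.choose else p, ?_, ?_⟩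
    · -- validity
      intro h p hown hq
      simp only []
      by_cases hp : G.owner p.1 = 0 ∧ p.2 ≠ U2.u0
      · rw [dif_pos hp]
        refine ⟨none, ⟨hval _ _ hp.1, Or.inr ⟨rfl, fun i hi => ?_⟩⟩, ?_⟩
        · have h1 := hH1 i _ hi
          rw [hp.1] at h1
          exact absurd h1 (by decide)
        · exact Stmt10Aux.ledge2_to_u0 hp.2
      · rw [dif_neg hp, dif_pos hq]
        exact hq.choose_spec
    · -- winning
      intro ρ hplay hcomp hinit hfair
      have hinv := Stmt10Aux.inv_of_play G Hs halt hplay hvinit hinit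
      have hplayG : IsPlay G (proj1 ρ) := fun k => (hplay k).choose_spec.1.1
      have hcompG : Compliant G 0 σ (proj1 ρ) := by
        intro k hk
        simp only [proj1] at hk
        have h2 : (ρ k).2 ≠ U2.u0 := fun h => by
          have h1 := (hinv k).mp h
          rw [hk] at h1
          exact absurd h1 (by decide)
        have hop : ownerProd (ρ k) = 0 := Stmt10Aux.ownerProd_eq_zero_iff.mpr h2
        have hc := hcomp k hop
        simp only [] at hc
        rw [dif_pos ⟨hk, h2⟩] at hc
        have h1 := congrArg Prod.fst hc
        simp only [List.map_ofFn] at h1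
        exact h1
      have hfairG := (Stmt10Aux.fair_iff G Hs hHE hH1 hdisj hplay hinv).mp hfair
      have hinit' : proj1 ρ 0 = vinit := by simp [proj1, hinit]
      exact hwin (proj1 ρ) hplayG hcompG hinit' hfairG
  · -- product winner ⇒ G winner
    rintro ⟨σ', hval', hwin'⟩
    refine ⟨fun h v =>
        (σ' (Stmt10Aux.liftL G Hs h)
          (v, Stmt10Aux.tagOf G Hs (h.getD (h.length - 1) v) v)).1, ?_, ?_⟩
    · -- validity
      intro h v hv
      have htne : Stmt10Aux.tagOf G Hs (h.getD (h.length - 1) v) v ≠ U2.u0 := fun hh => by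
        have h1 := (Stmt10Aux.tagOf_eq_u0_iff G Hs _ v).mp hh
        rw [hv] at h1
        exact absurd h1 (by decide)
      have hop : ownerProd (v, Stmt10Aux.tagOf G Hs (h.getD (h.length - 1) v) v) = 0 :=
        Stmt10Aux.ownerProd_eq_zero_iff.mpr htne
      obtain ⟨w, hw⟩ := G.exists_succ v
      have hq : ∃ q, Eprod G Hs (v, Stmt10Aux.tagOf G Hs (h.getD (h.length - 1) v) v) q := by
        refine ⟨(w, U2.u0), none, ⟨hw, Or.inr ⟨rfl, fun i hi => ?_⟩⟩,
          Stmt10Aux.ledge2_to_u0 htne⟩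
        have h1 := hH1 i _ hi
        rw [hv] at h1
        exact absurd h1 (by decide)
      obtain ⟨c, h1, h2⟩ := hval' (Stmt10Aux.liftL G Hs h) _ hop hq
      exact h1.1
    · -- winning
      intro π hplayG hcompG hinit
      simp only [Set.mem_setOf_eq]
      intro hfairG
      have h0 : G.owner (π 0) = 1 := by rw [hinit]; exact hvinit
      have hinv : ∀ n, (Stmt10Aux.tg G Hs π n = U2.u0 ↔ G.owner (π n) = 1) := by
        intro n
        cases n with
        | zero => exact ⟨fun _ => h0, fun _ => rfl⟩
        | succ k => exact Stmt10Aux.tagOf_eq_u0_iff G Hs _ _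
      have hplayP : ∀ n, Eprod G Hs (π n, Stmt10Aux.tg G Hs π n)
          (π (n + 1), Stmt10Aux.tg G Hs π (n + 1)) := fun n =>
        Stmt10Aux.lift_edge G Hs halt hH1 (hplayG n) (hinv n)
      have hcompP : ∀ n, ownerProd (π n, Stmt10Aux.tg G Hs π n) = 0 →
          (π (n + 1), Stmt10Aux.tg G Hs π (n + 1)) =
            σ' (List.ofFn fun j : Fin n => (π j.val, Stmt10Aux.tg G Hs π j.val))
              (π n, Stmt10Aux.tg G Hs π n) := by
        intro n hn
        have htne : Stmt10Aux.tg G Hs π n ≠ U2.u0 := Stmt10Aux.ownerProd_eq_zero_iff.mp hn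
        have hon : G.owner (π n) = 0 :=
          Stmt10Aux.fin2_eq_zero_of_ne_one (fun h => htne ((hinv n).mpr h))
        obtain _ | k := n
        · exact absurd (h0.symm.trans hon) (by decide)
        · have hcc := hcompG (k + 1) hon
          simp only [] at hcc
          have hgd : (List.ofFn fun j : Fin (k + 1) => π j.val).getD
              ((List.ofFn fun j : Fin (k + 1) => π j.val).length - 1) (π (k + 1)) = π k := by
            rw [List.length_ofFn]
            rw [List.getD_eq_getElem _ _ (by simp)]
            simp only [List.getElem_ofFn, Fin.coe_cast]
            congr 1
          rw [hgd, Stmt10Aux.liftL_ofFn G Hs π h0 (k + 1)] at hcc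
          -- hcc : π (k+2) = (σ' (ofFn …) (π (k+1), tagOf (π k) (π (k+1)))).1
          obtain ⟨c, h1, h2⟩ := hval'
            (List.ofFn fun j : Fin (k + 1) => (π j.val, Stmt10Aux.tg G Hs π j.val))
            (π (k + 1), Stmt10Aux.tg G Hs π (k + 1)) hn
            ⟨(π (k + 2), Stmt10Aux.tg G Hs π (k + 2)), hplayP (k + 1)⟩
          have hsnd : (σ' (List.ofFn fun j : Fin (k + 1) => (π j.val, Stmt10Aux.tg G Hs π j.val))
              (π (k + 1), Stmt10Aux.tg G Hs π (k + 1))).2 = U2.u0 := by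
            rcases hs2 : (σ' (List.ofFn fun j : Fin (k + 1) =>
                (π j.val, Stmt10Aux.tg G Hs π j.val))
                (π (k + 1), Stmt10Aux.tg G Hs π (k + 1))).2 with _ | _ | j
            · rfl
            · exfalso
              rw [hs2] at h2
              rcases hs1 : Stmt10Aux.tg G Hs π (k + 1) with _ | _ | i
              · exact htne hs1
              · rw [hs1] at h2; exact h2
              · rw [hs1] at h2; exact h2
            · exfalso
              rw [hs2] at h2
              rcases hs1 : Stmt10Aux.tg G Hs π (k + 1) with _ | _ | i
              · exact htne hs1
              · rw [hs1] at h2; exact h2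
              · rw [hs1] at h2; exact h2
          have htg2 : Stmt10Aux.tg G Hs π (k + 2) = U2.u0 :=
            (hinv (k + 2)).mpr (Stmt10Aux.fin2_eq_one_of_ne_zero
              (fun hh => halt _ _ (hplayG (k + 1)) (hon.trans hh.symm)))
          refine Prod.ext ?_ ?_
          · exact hcc
          · rw [hsnd]; exact htg2
      have hfairP : psiGlive (HprodSet G Hs)
          (fun n => (π n, Stmt10Aux.tg G Hs π n)) :=
        (Stmt10Aux.fair_iff G Hs hHE hH1 hdisj (fun n => hplayP n) (fun n => hinv n)).mpr hfairG
      exact hwin' (fun n => (π n, Stmt10Aux.tg G Hs π n)) (fun n => hplayP n)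
        (fun n => hcompP n) (Prod.ext hinit rfl) hfairP
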